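/- The mean function m(μ) = 2/μ - (1 + 2/μ) e^{-μ} of SSLUD(μ) is strictly decreasing on (0, ∞) and satisfies 0 < m(μ) < 1 for every μ > 0; consequently, for every value m̄ with 0 < m̄ < 1 there exists a unique μ > 0 with m(μ) = m̄. -/

import Mathlib

open Real

noncomputable def m (μ : ℝ) : ℝ := 2 / μ - (1 + 2 / μ) * Real.exp (-μ)

lemma quad_lt_exp (x : ℝ) (hx : 0 < x) : 1 + x + x^2/2 < Real.exp x := by
  have h := Real.sum_le_exp_of_nonneg hx.le 4
  simp [Finset.sum_range_succ, Nat.factorial] at h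
  nlinarith [pow_pos hx 3]

lemma k_pos (x : ℝ) (hx : 0 < x) : 0 < 1 + (x - 1) * Real.exp x := by
  have mono : StrictMonoOn (fun x : ℝ => 1 + (x - 1) * Real.exp x) (Set.Ici 0) := by
    apply strictMonoOn_of_deriv_pos (convex_Ici 0)
    · fun_prop
    · intro x hx
      rw [interior_Ici] at hx
      have hd : HasDerivAt (fun x : ℝ => 1 + (x - 1) * Real.exp x) (x * Real.exp x) x := by
        have := (((hasDerivAt_id x).sub_const 1).mul (Real.hasDerivAt_exp x)).const_add 1
        exact this.congr_deriv (by simp only [id_eq]; ring)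
      rw [hd.deriv]
      exact mul_pos hx (Real.exp_pos x)
  have := mono Set.self_mem_Ici (Set.mem_Ici.2 hx.le) hx
  simpa using this

lemma lemB (x : ℝ) (hx : 0 < x) : 2 * (Real.exp x - 1) < x * (Real.exp x + 1) := by
  have mono : StrictMonoOn (fun x : ℝ => x * (Real.exp x + 1) - 2 * (Real.exp x - 1))
      (Set.Ici 0) := by
    apply strictMonoOn_of_deriv_pos (convex_Ici 0)
    · fun_prop
    · intro x hx
      rw [interior_Ici] at hx
      have hd : HasDerivAt (fun x : ℝ => x * (Real.exp x + 1) - 2 * (Real.exp x - 1))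
          (1 + (x - 1) * Real.exp x) x := by
        have := ((hasDerivAt_id x).mul ((Real.hasDerivAt_exp x).add_const 1)).sub
          (((Real.hasDerivAt_exp x).sub_const 1).const_mul 2)
        exact this.congr_deriv (by simp only [id_eq]; ring)
      rw [hd.deriv]
      exact k_pos x hx
  have := mono Set.self_mem_Ici (Set.mem_Ici.2 hx.le) hx
  simp only [Real.exp_zero] at this
  linarith

lemma m_contOn : ContinuousOn m (Set.Ioi (0 : ℝ)) := by
  intro x hx
  have hx0 : x ≠ 0 := ne_of_gt hx
  apply ContinuousAt.continuousWithinAt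
  unfold m
  fun_prop (disch := assumption)

lemma m_anti : StrictAntiOn m (Set.Ioi (0 : ℝ)) := by
  apply strictAntiOn_of_deriv_neg (convex_Ioi 0) m_contOn
  intro x hx
  rw [interior_Ioi] at hx
  have hx0 : x ≠ 0 := ne_of_gt hx
  have hE := Real.exp_pos x
  have hd : HasDerivAt m
      (-2 / x ^ 2 + (2 / x ^ 2 + 1 + 2 / x) * Real.exp (-x)) x := by
    have h1 : HasDerivAt (fun μ : ℝ => 2 / μ) (2 * (-(x ^ 2)⁻¹)) x := by
      simpa [div_eq_mul_inv] using (hasDerivAt_inv hx0).const_mul 2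
    have h2 : HasDerivAt (fun μ : ℝ => Real.exp (-μ)) (Real.exp (-x) * (-1)) x :=
      (Real.hasDerivAt_exp (-x)).comp x (hasDerivAt_neg x)
    have := h1.sub ((h1.const_add 1).mul h2)
    exact this.congr_deriv (by rw [Real.exp_neg]; field_simp; ring)
  rw [hd.deriv]
  have heq : -2 / x ^ 2 + (2 / x ^ 2 + 1 + 2 / x) * Real.exp (-x)
      = ((2 + 2 * x + x ^ 2) - 2 * Real.exp x) / (x ^ 2 * Real.exp x) := by
    rw [Real.exp_neg]
    field_simp
    ring
  rw [heq]
  apply div_neg_of_neg_of_pos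
  · have := quad_lt_exp x hx
    nlinarith
  · positivity

lemma m_eq (μ : ℝ) (hμ : 0 < μ) :
    m μ = (2 * Real.exp μ - μ - 2) / (μ * Real.exp μ) := by
  unfold m
  rw [Real.exp_neg]
  have hE := (Real.exp_pos μ).ne'
  field_simp
  ring

lemma m_bounds (μ : ℝ) (hμ : 0 < μ) : 0 < m μ ∧ m μ < 1 := by
  have hE := Real.exp_pos μ
  rw [m_eq μ hμ]
  constructor
  · apply div_pos
    · have := Real.add_one_lt_exp (ne_of_gt hμ)
      linarith
    · positivity
  · rw [div_lt_one (by positivity)]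
    have := lemB μ hμ
    nlinarith

theorem sslud_mean_monotone :
    StrictAntiOn m (Set.Ioi (0 : ℝ)) ∧
    (∀ μ : ℝ, 0 < μ → 0 < m μ ∧ m μ < 1) ∧
    (∀ y : ℝ, 0 < y → y < 1 → ∃! μ : ℝ, 0 < μ ∧ m μ = y) := by
  refine ⟨m_anti, fun μ hμ => m_bounds μ hμ, fun y hy0 hy1 => ?_⟩
  -- limit of m at infinity is 0
  have tinf : Filter.Tendsto m Filter.atTop (nhds 0) := by
    have t1 : Filter.Tendsto (fun μ : ℝ => 2 / μ) Filter.atTop (nhds 0) :=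
      Filter.Tendsto.div_atTop tendsto_const_nhds Filter.tendsto_id
    have t2 : Filter.Tendsto (fun μ : ℝ => Real.exp (-μ)) Filter.atTop (nhds 0) := by
      exact Real.tendsto_exp_neg_atTop_nhds_zero
    have tc : Filter.Tendsto (fun _ : ℝ => (1:ℝ)) Filter.atTop (nhds 1) :=
      tendsto_const_nhds
    have := t1.sub ((tc.add t1).mul t2)
    simp at this
    exact this
  -- limit of m at 0⁺ is 1
  have t0 : Filter.Tendsto m (nhdsWithin 0 (Set.Ioi 0)) (nhds 1) := by
    have tnb : Filter.Tendsto (fun μ : ℝ => -μ) (nhdsWithin (0:ℝ) (Set.Ioi 0))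
        (nhdsWithin (0:ℝ) {(0:ℝ)}ᶜ) := by
      rw [tendsto_nhdsWithin_iff]
      constructor
      · have : Filter.Tendsto (fun μ : ℝ => -μ) (nhds (0:ℝ)) (nhds (-0 : ℝ)) :=
          (continuous_neg.tendsto 0)
        simpa using this.mono_left nhdsWithin_le_nhds
      · filter_upwards [self_mem_nhdsWithin] with μ hμ
        exact neg_ne_zero.mpr (ne_of_gt hμ)
    have hslope := (hasDerivAt_iff_tendsto_slope.mp (Real.hasDerivAt_exp 0)).comp tnb
    rw [Real.exp_zero] at hslope
    have tneg : Filter.Tendsto (fun μ : ℝ => -μ) (nhdsWithin (0:ℝ) (Set.Ioi 0))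
        (nhds 0) := by
      have := (continuous_neg.tendsto (0:ℝ)).mono_left
        (nhdsWithin_le_nhds (s := Set.Ioi (0:ℝ)))
      simpa using this
    have tc : Filter.Tendsto (fun _ : ℝ => (2:ℝ)) (nhdsWithin (0:ℝ) (Set.Ioi 0))
        (nhds 2) := tendsto_const_nhds
    have := ((tc.mul hslope).sub ((Real.continuous_exp.tendsto 0).comp tneg))
    have key : Filter.Tendsto
        (fun μ : ℝ => 2 * slope Real.exp 0 (-μ) - Real.exp (-μ))
        (nhdsWithin (0:ℝ) (Set.Ioi 0)) (nhds 1) := by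
      norm_num [Function.comp] at this
      exact this
    apply key.congr'
    filter_upwards [self_mem_nhdsWithin] with μ hμ
    have hμ0 : μ ≠ 0 := ne_of_gt hμ
    unfold m
    have h2 : (Real.exp (-μ) - Real.exp 0) / (-μ - 0) = (1 - Real.exp (-μ)) / μ := by
      rw [Real.exp_zero, sub_zero, ← neg_div_neg_eq, neg_neg, neg_sub]
    rw [slope_def_field, h2]
    field_simp [hμ0]
    ring
  -- find a with m a > y
  have hne : (nhdsWithin (0:ℝ) (Set.Ioi 0)).NeBot := nhdsGT_neBot 0
  obtain ⟨a, ha, hay⟩ : ∃ a, a ∈ Set.Ioi (0:ℝ) ∧ y < m a := by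
    have h1 : ∀ᶠ μ in nhdsWithin (0:ℝ) (Set.Ioi 0), y < m μ :=
      t0.eventually (eventually_gt_nhds hy1)
    exact ((eventually_mem_nhdsWithin.and h1).exists).imp fun a h => ⟨h.1, h.2⟩
  obtain ⟨b, hb, hby⟩ : ∃ b, b ∈ Set.Ioi (0:ℝ) ∧ m b < y := by
    have h1 : ∀ᶠ μ in Filter.atTop, m μ < y :=
      tinf.eventually (eventually_lt_nhds hy0)
    exact ((Filter.eventually_gt_atTop 0).and h1).exists.imp fun b h => ⟨h.1, h.2⟩
  have hab : a < b := by
    by_contra h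
    push_neg at h
    rcases eq_or_lt_of_le h with h | h
    · subst h; linarith
    · have := m_anti hb ha h
      linarith
  have hcont : ContinuousOn m (Set.Icc a b) :=
    m_contOn.mono fun x hx => lt_of_lt_of_le ha hx.1
  have hy : y ∈ Set.Icc (m b) (m a) := ⟨hby.le, hay.le⟩
  obtain ⟨μ, hμmem, hμy⟩ := intermediate_value_Icc' hab.le hcont hy
  have hμpos : 0 < μ := lt_of_lt_of_le ha hμmem.1
  refine ⟨μ, ⟨hμpos, hμy⟩, ?_⟩
  rintro ν ⟨hν, hνy⟩
  exact m_anti.injOn hν hμpos (by rw [hνy, hμy])
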